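/- Let 1/2 ≤ a ≤ 1 and define r_a by 1/r_a = (2/3) - (a/3). Let (X, m) be a measure space, let 0 < T < ∞, and let u(s), for s ∈ (0,T], be a measurable family of measurable functions on X (with values in a normed space). Then ∫₀ᵀ s^a ‖u(s)‖_{L^{r_a}(m)}² ds ≤ T^{a-(1/2)} ( ∫₀ᵀ s^{1-a} ‖u(s)‖_{L²(m)}² ds )^{(3/2)-a} ( ∫₀ᵀ s^{2-a} ‖u(s)‖_{L⁶(m)}² ds )^{a-(1/2)}, all integrals being interpreted in [0,∞]. -/

import Mathlib

open MeasureTheory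
open scoped ENNReal

open ENNReal in
lemma interp_aux {X : Type*} [MeasurableSpace X] (m : Measure X)
    {E : Type*} [NormedAddCommGroup E] {f : X → E} (hf : AEStronglyMeasurable f m)
    {r α β : ℝ} (hα : 0 ≤ α) (hβ : 0 ≤ β) (hαβ : α + β = 1) (hr : 1 / r = α/2 + β/6) :
    eLpNorm f (ENNReal.ofReal r) m ≤ eLpNorm f 2 m ^ α * eLpNorm f 6 m ^ β := by
  have hrpos : 0 < r := by
    rw [← one_div_pos, hr]; linarith
  set p := r * (α/2) with hp_def
  set q := r * (β/6) with hq_def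
  have hp : 0 ≤ p := by positivity
  have hq : 0 ≤ q := by positivity
  have hpq : p + q = 1 := by
    have : p + q = r * (1/r) := by rw [hr]; ring
    rw [this, mul_one_div_cancel hrpos.ne']
  have hexp : 2*p + 6*q = r := by
    rw [hp_def, hq_def]; linear_combination r * hαβ
  have hm2 : AEMeasurable (fun x => (‖f x‖₊ : ℝ≥0∞) ^ (2:ℝ)) m := hf.enorm.pow_const _
  have hm6 : AEMeasurable (fun x => (‖f x‖₊ : ℝ≥0∞) ^ (6:ℝ)) m := hf.enorm.pow_const _
  have key := lintegral_mul_norm_pow_le hm2 hm6 hp hq hpq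
  have hptw : ∀ x : X, (‖f x‖₊ : ℝ≥0∞) ^ r
      = ((‖f x‖₊ : ℝ≥0∞) ^ (2:ℝ)) ^ p * ((‖f x‖₊ : ℝ≥0∞) ^ (6:ℝ)) ^ q := by
    intro x
    rw [← ENNReal.rpow_mul, ← ENNReal.rpow_mul,
      ← ENNReal.rpow_add_of_nonneg _ _ (by positivity) (by positivity)]
    congr 1
    linarith [hexp]
  have hrnorm : eLpNorm f (ENNReal.ofReal r) m
      = (∫⁻ x, (‖f x‖₊ : ℝ≥0∞) ^ r ∂m) ^ (1/r) := by
    rw [eLpNorm_eq_lintegral_rpow_enorm_toReal (by simpa using hrpos) ENNReal.ofReal_ne_top,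
      ENNReal.toReal_ofReal hrpos.le]
    simp only [enorm_eq_nnnorm]
  have h2norm : eLpNorm f 2 m = (∫⁻ x, (‖f x‖₊ : ℝ≥0∞) ^ (2:ℝ) ∂m) ^ (1/(2:ℝ)) := by
    rw [eLpNorm_eq_lintegral_rpow_enorm_toReal (by norm_num) (by norm_num)]
    norm_num [enorm_eq_nnnorm]
  have h6norm : eLpNorm f 6 m = (∫⁻ x, (‖f x‖₊ : ℝ≥0∞) ^ (6:ℝ) ∂m) ^ (1/(6:ℝ)) := by
    rw [eLpNorm_eq_lintegral_rpow_enorm_toReal (by norm_num) (by norm_num)]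
    norm_num [enorm_eq_nnnorm]
  rw [hrnorm, h2norm, h6norm]
  calc (∫⁻ x, (‖f x‖₊ : ℝ≥0∞) ^ r ∂m) ^ (1/r)
      ≤ ((∫⁻ x, (‖f x‖₊ : ℝ≥0∞) ^ (2:ℝ) ∂m) ^ p
          * (∫⁻ x, (‖f x‖₊ : ℝ≥0∞) ^ (6:ℝ) ∂m) ^ q) ^ (1/r) := by
        apply ENNReal.rpow_le_rpow _ (by positivity)
        simpa only [hptw] using key
    _ = ((∫⁻ x, (‖f x‖₊ : ℝ≥0∞) ^ (2:ℝ) ∂m) ^ (1/(2:ℝ))) ^ α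
          * ((∫⁻ x, (‖f x‖₊ : ℝ≥0∞) ^ (6:ℝ) ∂m) ^ (1/(6:ℝ))) ^ β := by
        rw [ENNReal.mul_rpow_of_nonneg _ _ (by positivity),
          ← ENNReal.rpow_mul, ← ENNReal.rpow_mul, ← ENNReal.rpow_mul, ← ENNReal.rpow_mul]
        congr 1 <;> congr 1 <;> field_simp <;> ring


/-- Lemma 8.14 (time-weighted interpolation): for `1/2 ≤ a ≤ 1`, `1/r_a = 2/3 - a/3`, a
measure space `(X, m)`, `0 < T < ∞` and a measurable family `u(s)` of measurable functions
on `X`,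
`∫₀ᵀ s^a ‖u(s)‖_{r_a}² ds ≤ T^{a-1/2} (∫₀ᵀ s^{1-a} ‖u(s)‖₂² ds)^{3/2-a}
  (∫₀ᵀ s^{2-a} ‖u(s)‖₆² ds)^{a-1/2}`, all integrals interpreted in `[0,∞]`. -/
theorem weighted_interpolation_inequality
    {X : Type*} [MeasurableSpace X] (m : Measure X)
    {E : Type*} [NormedAddCommGroup E]
    (a r : ℝ) (ha1 : 1/2 ≤ a) (ha2 : a ≤ 1) (hr : 1 / r = 2/3 - a/3)
    (T : ℝ) (hT : 0 < T) (u : ℝ → X → E)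
    (humeas : ∀ s ∈ Set.Ioo (0:ℝ) T, AEStronglyMeasurable (u s) m)
    (h2meas : AEMeasurable (fun s => eLpNorm (u s) 2 m) (volume.restrict (Set.Ioo 0 T)))
    (h6meas : AEMeasurable (fun s => eLpNorm (u s) 6 m) (volume.restrict (Set.Ioo 0 T))) :
    ∫⁻ s in Set.Ioo (0:ℝ) T,
        ENNReal.ofReal (s ^ a) * eLpNorm (u s) (ENNReal.ofReal r) m ^ 2 ≤
      ENNReal.ofReal (T ^ (a - 1/2)) *
        (∫⁻ s in Set.Ioo (0:ℝ) T,
            ENNReal.ofReal (s ^ (1 - a)) * eLpNorm (u s) 2 m ^ 2) ^ (3/2 - a) *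
        (∫⁻ s in Set.Ioo (0:ℝ) T,
            ENNReal.ofReal (s ^ (2 - a)) * eLpNorm (u s) 6 m ^ 2) ^ (a - 1/2) := by
  have hα : (0:ℝ) ≤ 3/2 - a := by linarith
  have hβ : (0:ℝ) ≤ a - 1/2 := by linarith
  have hαβ : (3/2 - a) + (a - 1/2) = 1 := by ring
  have hr' : 1 / r = (3/2 - a)/2 + (a - 1/2)/6 := by rw [hr]; ring
  set F : ℝ → ℝ≥0∞ := fun s => ENNReal.ofReal (s ^ (1 - a)) * eLpNorm (u s) 2 m ^ 2 with hF
  set G : ℝ → ℝ≥0∞ := fun s => ENNReal.ofReal (s ^ (2 - a)) * eLpNorm (u s) 6 m ^ 2 with hG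
  -- pointwise bound
  have hpt : ∀ s ∈ Set.Ioo (0:ℝ) T,
      ENNReal.ofReal (s ^ a) * eLpNorm (u s) (ENNReal.ofReal r) m ^ 2 ≤
      ENNReal.ofReal (T ^ (a - 1/2)) * (F s ^ (3/2 - a) * G s ^ (a - 1/2)) := by
    intro s hs
    obtain ⟨hs0, hsT⟩ := hs
    have hint := interp_aux m (humeas s ⟨hs0, hsT⟩) hα hβ hαβ hr'
    set e2 := eLpNorm (u s) 2 m
    set e6 := eLpNorm (u s) 6 m
    have hsq : eLpNorm (u s) (ENNReal.ofReal r) m ^ 2 ≤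
        (e2 ^ 2) ^ (3/2 - a) * (e6 ^ 2) ^ (a - 1/2) := by
      calc eLpNorm (u s) (ENNReal.ofReal r) m ^ 2
          ≤ (e2 ^ (3/2 - a) * e6 ^ (a - 1/2)) ^ 2 := pow_le_pow_left' hint 2
        _ = (e2 ^ 2) ^ (3/2 - a) * (e6 ^ 2) ^ (a - 1/2) := by
            rw [mul_pow, ← ENNReal.rpow_natCast (e2 ^ (3/2 - a)),
              ← ENNReal.rpow_natCast (e6 ^ (a - 1/2)),
              ← ENNReal.rpow_natCast e2, ← ENNReal.rpow_natCast e6,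
              ← ENNReal.rpow_mul, ← ENNReal.rpow_mul, ← ENNReal.rpow_mul,
              ← ENNReal.rpow_mul]
            push_cast
            rw [mul_comm (3/2 - a) 2, mul_comm (a - 1/2) 2]
    have hwt : ENNReal.ofReal (s ^ a) ≤ ENNReal.ofReal (T ^ (a - 1/2)) *
        ENNReal.ofReal (s ^ (1 - a)) ^ (3/2 - a) *
        ENNReal.ofReal (s ^ (2 - a)) ^ (a - 1/2) := by
      have hreal : s ^ a ≤ T ^ (a - 1/2) * (s ^ (1 - a)) ^ (3/2 - a) *
          (s ^ (2 - a)) ^ (a - 1/2) := by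
        rw [← Real.rpow_mul hs0.le, ← Real.rpow_mul hs0.le]
        have h1 : s ^ a = s ^ (a - 1/2) * s ^ ((1 - a) * (3/2 - a)) *
            s ^ ((2 - a) * (a - 1/2)) := by
          rw [← Real.rpow_add hs0, ← Real.rpow_add hs0]
          congr 1
          ring
        rw [h1]
        have hTs : s ^ (a - 1/2) ≤ T ^ (a - 1/2) := Real.rpow_le_rpow hs0.le hsT.le hβ
        have h2 : (0:ℝ) ≤ s ^ ((1 - a) * (3/2 - a)) := Real.rpow_nonneg hs0.le _
        have h3 : (0:ℝ) ≤ s ^ ((2 - a) * (a - 1/2)) := Real.rpow_nonneg hs0.le _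
        gcongr
      calc ENNReal.ofReal (s ^ a)
          ≤ ENNReal.ofReal (T ^ (a - 1/2) * (s ^ (1 - a)) ^ (3/2 - a) *
              (s ^ (2 - a)) ^ (a - 1/2)) := ENNReal.ofReal_le_ofReal hreal
        _ = _ := by
            rw [ENNReal.ofReal_mul (by positivity), ENNReal.ofReal_mul (by positivity),
              ENNReal.ofReal_rpow_of_nonneg (by positivity) hα,
              ENNReal.ofReal_rpow_of_nonneg (by positivity) hβ]
    calc ENNReal.ofReal (s ^ a) * eLpNorm (u s) (ENNReal.ofReal r) m ^ 2
        ≤ (ENNReal.ofReal (T ^ (a - 1/2)) * ENNReal.ofReal (s ^ (1 - a)) ^ (3/2 - a) *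
            ENNReal.ofReal (s ^ (2 - a)) ^ (a - 1/2)) *
          ((e2 ^ 2) ^ (3/2 - a) * (e6 ^ 2) ^ (a - 1/2)) := mul_le_mul' hwt hsq
      _ = ENNReal.ofReal (T ^ (a - 1/2)) * (F s ^ (3/2 - a) * G s ^ (a - 1/2)) := by
          rw [hF, hG]
          simp only []
          rw [ENNReal.mul_rpow_of_nonneg _ _ hα, ENNReal.mul_rpow_of_nonneg _ _ hβ]
          ring
  have hFmeas : AEMeasurable F (volume.restrict (Set.Ioo (0:ℝ) T)) := by
    exact ((measurable_id.pow (measurable_const : Measurable fun _ : ℝ => (1 - a))).ennreal_ofReal).aemeasurable.mul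
      (h2meas.pow_const 2)
  have hGmeas : AEMeasurable G (volume.restrict (Set.Ioo (0:ℝ) T)) := by
    exact ((measurable_id.pow (measurable_const : Measurable fun _ : ℝ => (2 - a))).ennreal_ofReal).aemeasurable.mul
      (h6meas.pow_const 2)
  calc ∫⁻ s in Set.Ioo (0:ℝ) T,
        ENNReal.ofReal (s ^ a) * eLpNorm (u s) (ENNReal.ofReal r) m ^ 2
      ≤ ∫⁻ s in Set.Ioo (0:ℝ) T,
          ENNReal.ofReal (T ^ (a - 1/2)) * (F s ^ (3/2 - a) * G s ^ (a - 1/2)) := by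
        refine lintegral_mono_ae ?_
        filter_upwards [ae_restrict_mem measurableSet_Ioo] with s hs
        exact hpt s hs
    _ = ENNReal.ofReal (T ^ (a - 1/2)) *
        ∫⁻ s in Set.Ioo (0:ℝ) T, F s ^ (3/2 - a) * G s ^ (a - 1/2) :=
        lintegral_const_mul' _ _ ENNReal.ofReal_ne_top
    _ ≤ ENNReal.ofReal (T ^ (a - 1/2)) *
        ((∫⁻ s in Set.Ioo (0:ℝ) T, F s) ^ (3/2 - a) *
         (∫⁻ s in Set.Ioo (0:ℝ) T, G s) ^ (a - 1/2)) := by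
        exact mul_le_mul_right (ENNReal.lintegral_mul_norm_pow_le hFmeas hGmeas hα hβ hαβ) _
    _ = _ := by rw [← mul_assoc]
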